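/- Let G be a finite connected simple graph with at least 3 vertices (in particular G is not isomorphic to K_2), and let v be a vertex of G having a pendant neighbor, i.e., a neighbor of degree 1. Then v belongs to no minimum MEG-set of G. -/

import Mathlib

open SimpleGraph

/-- A pair of vertices `u`, `v` monitors an edge `e` if `u` and `v` are reachable from
each other and `e` belongs to every shortest path (walk of length `G.dist u v`)
between `u` and `v`. -/
def Monitors {V : Type*} (G : SimpleGraph V) (u v : V) (e : Sym2 V) : Prop :=
  G.Reachable u v ∧ ∀ p : G.Walk u v, p.length = G.dist u v → e ∈ p.edges

/-- A monitoring edge-geodetic set of `G`: every edge of `G` is monitored by some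
pair of vertices of `M`. -/
def IsMEGSet {V : Type*} (G : SimpleGraph V) (M : Set V) : Prop :=
  ∀ e ∈ G.edgeSet, ∃ u ∈ M, ∃ v ∈ M, Monitors G u v e

/-- The monitoring edge-geodetic number of `G`: the minimum size of an MEG-set. -/
noncomputable def meg {V : Type*} [Fintype V] (G : SimpleGraph V) : ℕ :=
  sInf {n : ℕ | ∃ M : Finset V, IsMEGSet G ↑M ∧ M.card = n}

section Aux

variable {V : Type*} {G : SimpleGraph V}

lemma not_monitors_self {a : V} {e : Sym2 V} : ¬ Monitors G a a e := by
  rintro ⟨-, h⟩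
  have := h .nil (by simp [SimpleGraph.dist_self])
  simp at this

lemma Monitors.symm' {a b : V} {e : Sym2 V} (h : Monitors G a b e) : Monitors G b a e := by
  obtain ⟨hr, h⟩ := h
  refine ⟨hr.symm, fun p hp => ?_⟩
  have := h p.reverse (by rw [SimpleGraph.Walk.length_reverse, hp, SimpleGraph.dist_comm])
  simpa using this

variable {u v : V}

/-- decomposition of a walk starting at a pendant vertex -/
lemma walk_from_pendant (hadj : G.Adj v u) (hun : ∀ x, G.Adj u x → x = v) {w : V} (hw : w ≠ u)
    (p : G.Walk u w) : ∃ q : G.Walk v w, p = SimpleGraph.Walk.cons hadj.symm q := by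
  cases p with
  | nil => exact absurd rfl hw
  | @cons _ x _ h q =>
    obtain rfl := hun x h
    exact ⟨q, rfl⟩

lemma dist_pendant (hadj : G.Adj v u) (hG : G.Connected) (hun : ∀ x, G.Adj u x → x = v) {w : V}
    (hw : w ≠ u) : G.dist u w = G.dist v w + 1 := by
  obtain ⟨q, hq⟩ := (hG v w).exists_walk_length_eq_dist
  obtain ⟨p, hp⟩ := (hG u w).exists_walk_length_eq_dist
  obtain ⟨q', rfl⟩ := walk_from_pendant hadj hun hw p
  have h1 : G.dist u w ≤ G.dist v w + 1 := by
    have := G.dist_le (SimpleGraph.Walk.cons hadj.symm q)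
    simpa [hq] using this
  have h2 : G.dist v w + 1 ≤ G.dist u w := by
    have := G.dist_le q'
    simp only [SimpleGraph.Walk.length_cons] at hp
    omega
  omega

lemma monitors_pendant (hadj : G.Adj v u) (hG : G.Connected) (hun : ∀ x, G.Adj u x → x = v) {w : V}
    (hw : w ≠ u) {e : Sym2 V} (he : e = s(u, v) ∨ Monitors G v w e) :
    Monitors G u w e := by
  refine ⟨hG u w, fun p hp => ?_⟩
  obtain ⟨q, rfl⟩ := walk_from_pendant hadj hun hw p
  rw [SimpleGraph.Walk.edges_cons]
  rcases he with rfl | ⟨-, hm⟩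
  · exact List.mem_cons_self
  · refine List.mem_cons_of_mem _ (hm q ?_)
    rw [dist_pendant hadj hG hun hw] at hp
    simp only [SimpleGraph.Walk.length_cons] at hp
    omega

/-- a pendant vertex belongs to every MEG-set -/
lemma pendant_mem_megSet (hadj : G.Adj v u) (hun : ∀ x, G.Adj u x → x = v) {M : Finset V}
    (hM : IsMEGSet G ↑M) : u ∈ M := by
  classical
  obtain ⟨a, ha, b, hb, hm⟩ := hM s(v, u) hadj
  suffices h : u = a ∨ u = b by rcases h with rfl | rfl <;> assumption
  by_contra h
  push_neg at h
  obtain ⟨hua, hub⟩ := h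
  obtain ⟨p, hpath, hlen⟩ := hm.1.exists_path_of_dist
  have he : s(v, u) ∈ p.edges := hm.2 p hlen
  have hu : u ∈ p.support := by
    rw [Sym2.eq_swap] at he
    exact p.fst_mem_support_of_mem_edges he
  -- split the path at u; both the incoming and outgoing edges must be s(u,v)
  have hnodup : p.edges.Nodup := hpath.isTrail.edges_nodup
  have hsplit := p.take_spec hu
  set p1 := p.takeUntil u hu with hp1
  set p2 := p.dropUntil u hu with hp2
  have he2 : s(u, v) ∈ p2.edges := by
    obtain ⟨q, hq⟩ := walk_from_pendant hadj hun hub.symm p2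
    rw [hq, SimpleGraph.Walk.edges_cons]
    exact List.mem_cons_self
  have he1 : s(u, v) ∈ p1.edges := by
    obtain ⟨q, hq⟩ := walk_from_pendant hadj hun hua.symm p1.reverse
    have : s(u, v) ∈ p1.reverse.edges := by
      rw [hq, SimpleGraph.Walk.edges_cons]
      exact List.mem_cons_self
    simpa using this
  have : p.edges = p1.edges ++ p2.edges := by
    rw [← hsplit, SimpleGraph.Walk.edges_append]
  rw [this] at hnodup
  exact (List.disjoint_of_nodup_append hnodup) he1 he2

end Aux

/-- in a finite connected graph on at least 3 vertices, a vertex having a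
pendant neighbor belongs to no minimum MEG-set. -/
theorem not_mem_minimum_megSet_of_pendant_neighbor {V : Type*} [Fintype V]
    (G : SimpleGraph V) [DecidableRel G.Adj] (hG : G.Connected)
    (hn : 3 ≤ Fintype.card V) (v u : V) (hadj : G.Adj v u) (hdeg : G.degree u = 1) :
    ∀ M : Finset V, IsMEGSet G ↑M → M.card = meg G → v ∉ M := by
  classical
  have hun : ∀ x, G.Adj u x → x = v := by
    intro x hx
    have hd1 : (G.neighborFinset u).card = 1 := by
      rw [SimpleGraph.card_neighborFinset_eq_degree]; exact hdeg
    obtain ⟨a, ha⟩ := Finset.card_eq_one.mp hd1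
    have hv : v ∈ G.neighborFinset u := by simpa using hadj.symm
    have hx' : x ∈ G.neighborFinset u := by simpa using hx
    rw [ha, Finset.mem_singleton] at hv hx'
    rw [hx', hv]
  intro M hM hcard hv
  have hu : u ∈ M := pendant_mem_megSet hadj hun hM
  have huv : u ≠ v := hadj.ne'
  -- M has an element other than u and v
  have hM3 : ∃ x ∈ M, x ≠ u ∧ x ≠ v := by
    by_contra h
    push_neg at h
    -- get a third vertex w and an edge at w
    have hne : ({u, v} : Finset V) ≠ Finset.univ := by
      intro heq
      have : (({u, v} : Finset V)).card ≤ 2 := Finset.card_insert_le _ _ |>.trans (by simp)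
      rw [heq, Finset.card_univ] at this
      omega
    obtain ⟨w, -, hw⟩ := Finset.exists_of_ssubset (Finset.ssubset_univ_iff.mpr hne)
    simp only [Finset.mem_insert, Finset.mem_singleton, not_or] at hw
    obtain ⟨hwu, hwv⟩ := hw
    -- w has a neighbor x
    obtain ⟨pw⟩ := hG w u
    have hx : ∃ x, G.Adj w x := by
      cases pw with
      | nil => exact absurd rfl hwu
      | cons h q => exact ⟨_, h⟩
    obtain ⟨x, hwx⟩ := hx
    obtain ⟨a, ha, b, hb, hm⟩ := hM s(w, x) hwx
    -- a, b ∈ {u, v} and a ≠ b, so {a,b} = {u,v} and Monitors u v s(w,x) (up to symm)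
    have h2 : ∀ y ∈ M, y = u ∨ y = v := by
      intro y hy
      by_cases h' : y = u
      · exact Or.inl h'
      · exact Or.inr (h y hy h')
    have hmon : Monitors G u v s(w, x) ∨ Monitors G v u s(w, x) := by
      rcases h2 a ha with rfl | rfl <;> rcases h2 b hb with rfl | rfl
      · exact absurd hm not_monitors_self
      · exact Or.inl hm
      · exact Or.inr hm
      · exact absurd hm not_monitors_self
    have hmon' : Monitors G u v s(w, x) := by
      rcases hmon with h' | h'
      · exact h'
      · exact h'.symm'
    have hd : G.dist u v = 1 := SimpleGraph.dist_eq_one_iff_adj.mpr hadj.symm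
    have := hmon'.2 (SimpleGraph.Walk.cons hadj.symm .nil) (by simp [hd])
    simp only [SimpleGraph.Walk.edges_cons, SimpleGraph.Walk.edges_nil,
      List.mem_singleton, List.mem_cons, List.not_mem_nil, or_false] at this
    rw [Sym2.eq_iff] at this
    rcases this with ⟨h1, -⟩ | ⟨h1, -⟩
    · exact hwu h1
    · exact hwv h1
  obtain ⟨x, hxM, hxu, hxv⟩ := hM3
  -- M.erase v is an MEG-set
  have hM' : IsMEGSet G ↑(M.erase v) := by
    intro e he
    obtain ⟨a, ha, b, hb, hm⟩ := hM e he
    simp only [Finset.coe_erase, Set.mem_diff, Finset.mem_coe, Set.mem_singleton_iff] at *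
    -- helper to treat the case a = v
    have key : ∀ b ∈ M, b ≠ v → Monitors G v b e → ∃ c ∈ M, c ≠ v ∧ ∃ d ∈ M, d ≠ v ∧
        Monitors G c d e := by
      intro b hb hbv hm
      by_cases hbu : b = u
      · -- e must be the pendant edge s(v,u)
        have hm' : Monitors G v u e := hbu ▸ hm
        have hd : G.dist v u = 1 := SimpleGraph.dist_eq_one_iff_adj.mpr hadj
        have heq := hm'.2 (SimpleGraph.Walk.cons hadj .nil) (by simp [hd])
        simp only [SimpleGraph.Walk.edges_cons, SimpleGraph.Walk.edges_nil,
          List.mem_cons, List.not_mem_nil, or_false] at heq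
        refine ⟨u, hbu ▸ hb, huv, x, hxM, hxv, ?_⟩
        exact monitors_pendant hadj hG hun hxu (Or.inl (by rw [heq, Sym2.eq_swap]))
      · refine ⟨u, hu, huv, b, hb, hbv, ?_⟩
        exact monitors_pendant hadj hG hun hbu (Or.inr hm)
    by_cases hav : a = v
    · subst hav
      by_cases hbv : b = a
      · subst hbv
        exact absurd hm not_monitors_self
      · obtain ⟨c, hc, hcv, d, hd, hdv, hmon⟩ := key b hb hbv hm
        exact ⟨c, ⟨hc, hcv⟩, d, ⟨hd, hdv⟩, hmon⟩
    · by_cases hbv : b = v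
      · subst hbv
        obtain ⟨c, hc, hcv, d, hd, hdv, hmon⟩ := key a ha hav hm.symm'
        exact ⟨c, ⟨hc, hcv⟩, d, ⟨hd, hdv⟩, hmon⟩
      · exact ⟨a, ⟨ha, hav⟩, b, ⟨hb, hbv⟩, hm⟩
  -- contradiction with minimality
  have hle : meg G ≤ (M.erase v).card := Nat.sInf_le ⟨M.erase v, hM', rfl⟩
  have hlt : (M.erase v).card < M.card := Finset.card_erase_lt_of_mem hv
  omega
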